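/- arXiv:0712.0401 — 2 statements merged into one kernel-verified Lean document; each statement's English description precedes it below -/
import Mathlib

section
/- Let F be a continuous bounded complex-valued function on the closed strip {z ∈ ℂ : 0 ≤ Im z ≤ 1}, holomorphic on the open strip {0 < Im z < 1}, and satisfying F(x) = F(x + i) for all x ∈ ℝ. Then F is constant. -/
open Complex Set intervalIntegral MeasureTheory


private lemma aux_abs {a b t : ℝ} (ht : t ∈ Set.uIoc a b) : |t - a| ≤ |b - a| := by
  rcases Set.mem_uIoc.mp ht with ⟨h1, h2⟩ | ⟨h1, h2⟩
  · rw [abs_of_pos (by linarith), abs_of_pos (by linarith)]; linarith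
  · rw [abs_of_nonpos (by linarith), abs_of_neg (by linarith)]; linarith

private lemma rectA {G : ℂ → ℂ} {r : ℝ} (hc : Continuous G)
    (hd : ∀ z : ℂ, r - 1 < z.im → z.im < r + 1 → z.im ≠ r → DifferentiableAt ℂ G z)
    (x₁ x₂ y : ℝ) (hy1 : r - 1 < y) (hy2 : y < r + 1) :
    (∫ t in x₁..x₂, G (t + y * I)) - (∫ t in x₁..x₂, G (t + r * I))
      + I • (∫ s in y..r, G (x₂ + s * I)) - I • (∫ s in y..r, G (x₁ + s * I)) = 0 := by
  have h := Complex.integral_boundary_rect_eq_zero_of_continuousOn_of_differentiableOn G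
    (x₁ + y * I) (x₂ + r * I) (hc.continuousOn) ?_
  · simpa using h
  · intro z hz
    rw [Complex.mem_reProdIm] at hz
    obtain ⟨hz1, hz2⟩ := hz
    simp only [add_im, ofReal_im, mul_im, ofReal_re, I_im, mul_one, I_re, mul_zero, add_zero,
      zero_add] at hz2
    have hmin : r - 1 < min y r := lt_min hy1 (by linarith)
    have hmax : max y r < r + 1 := max_lt hy2 (by linarith)
    have hne : z.im ≠ r := by
      rcases le_total y r with hyr | hyr
      · rw [max_eq_right hyr] at hz2; exact ne_of_lt hz2.2
      · rw [min_eq_right hyr] at hz2; exact ne_of_gt hz2.1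
    exact (hd z (lt_trans hmin hz2.1) (lt_trans hz2.2 hmax) hne).differentiableWithinAt

private lemma contV {G : ℂ → ℂ} (hc : Continuous G) (x : ℝ) :
    Continuous (fun s : ℝ => G (x + s * I)) :=
  hc.comp (continuous_const.add (Complex.continuous_ofReal.mul continuous_const))

private lemma contH {G : ℂ → ℂ} (hc : Continuous G) (y : ℝ) :
    Continuous (fun t : ℝ => G (t + y * I)) :=
  hc.comp (Complex.continuous_ofReal.add continuous_const)

private lemma rectB {G : ℂ → ℂ} {r : ℝ} (hc : Continuous G)
    (hd : ∀ z : ℂ, r - 1 < z.im → z.im < r + 1 → z.im ≠ r → DifferentiableAt ℂ G z)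
    (x₁ x₂ y₁ y₂ : ℝ) (h11 : r - 1 < y₁) (h12 : y₁ < r + 1) (h21 : r - 1 < y₂) (h22 : y₂ < r + 1) :
    (∫ t in x₁..x₂, G (t + y₁ * I)) - (∫ t in x₁..x₂, G (t + y₂ * I))
      + I • (∫ s in y₁..y₂, G (x₂ + s * I)) - I • (∫ s in y₁..y₂, G (x₁ + s * I)) = 0 := by
  have A₁ := rectA hc hd x₁ x₂ y₁ h11 h12
  have A₂ := rectA hc hd x₁ x₂ y₂ h21 h22
  have key : ∀ x : ℝ, (∫ s in y₁..r, G (x + s * I)) - (∫ s in y₂..r, G (x + s * I))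
      = ∫ s in y₁..y₂, G (x + s * I) := by
    intro x
    have h := intervalIntegral.integral_add_adjacent_intervals (μ := volume)
      ((contV hc x).intervalIntegrable y₁ r) ((contV hc x).intervalIntegrable r y₂)
    have h2 := intervalIntegral.integral_symm (f := fun s : ℝ => G (x + s * I)) (μ := volume) y₂ r
    linear_combination h - h2
  simp only [smul_eq_mul] at A₁ A₂ ⊢
  linear_combination A₁ - A₂ - I * key x₂ + I * key x₁

private lemma removable_line {G : ℂ → ℂ} {r : ℝ} (hc : Continuous G)
    (hd : ∀ z : ℂ, r - 1 < z.im → z.im < r + 1 → z.im ≠ r → DifferentiableAt ℂ G z) :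
    ∀ z : ℂ, r - 1 < z.im → z.im < r + 1 → DifferentiableAt ℂ G z := by
  set P : ℂ → ℂ := fun z => (∫ t in (0:ℝ)..z.re, G (t + r * I))
      + I • ∫ s in r..z.im, G (z.re + s * I) with hPdef
  -- key displacement formula
  have hkey : ∀ z w : ℂ, r - 1 < z.im → z.im < r + 1 →
      P w = P z + (∫ t in z.re..w.re, G (t + z.im * I))
        + I • ∫ s in z.im..w.im, G (w.re + s * I) := by
    intro z w h1 h2
    have hrect := rectB hc hd z.re w.re r z.im (by linarith) (by linarith) h1 h2
    have e1 := intervalIntegral.integral_add_adjacent_intervals (μ := volume)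
      ((contH hc r).intervalIntegrable 0 z.re) ((contH hc r).intervalIntegrable z.re w.re)
    have e2 := intervalIntegral.integral_add_adjacent_intervals (μ := volume)
      ((contV hc w.re).intervalIntegrable r z.im) ((contV hc w.re).intervalIntegrable z.im w.im)
    simp only [hPdef, smul_eq_mul] at *
    linear_combination -e1 - I * e2 + hrect
  -- derivative of the primitive
  have hder : ∀ z : ℂ, r - 1 < z.im → z.im < r + 1 → HasDerivAt P (G z) z := by
    intro z h1 h2
    rw [hasDerivAt_iff_isLittleO, Asymptotics.isLittleO_iff]
    intro c hc0
    obtain ⟨δ, hδ0, hδ⟩ := Metric.continuousAt_iff.mp hc.continuousAt (c / 2) (by linarith)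
    filter_upwards [Metric.ball_mem_nhds z (show (0:ℝ) < δ / 2 by linarith)] with w hw
    rw [Metric.mem_ball, Complex.dist_eq] at hw
    have hQ1 : ∫ t in z.re..w.re, (G (t + z.im * I) - G z)
        = (∫ t in z.re..w.re, G (t + z.im * I)) - (w.re - z.re) • G z := by
      rw [intervalIntegral.integral_sub ((contH hc z.im).intervalIntegrable _ _)
        (intervalIntegrable_const), intervalIntegral.integral_const]
    have hQ2 : ∫ s in z.im..w.im, (G (w.re + s * I) - G z)
        = (∫ s in z.im..w.im, G (w.re + s * I)) - (w.im - z.im) • G z := by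
      rw [intervalIntegral.integral_sub ((contV hc w.re).intervalIntegrable _ _)
        (intervalIntegrable_const), intervalIntegral.integral_const]
    have hre : ((w.re - z.re : ℝ) : ℂ) + ((w.im - z.im : ℝ) : ℂ) * I = w - z := by
      simp [Complex.ext_iff]
    have hexp : P w - P z - (w - z) • G z
        = (∫ t in z.re..w.re, (G (t + z.im * I) - G z))
          + I • ∫ s in z.im..w.im, (G (w.re + s * I) - G z) := by
      rw [hkey z w h1 h2, hQ1, hQ2]
      simp only [smul_eq_mul, Complex.real_smul]
      linear_combination (G z) * hre
    rw [hexp]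
    have b1 : ‖∫ t in z.re..w.re, (G (t + z.im * I) - G z)‖ ≤ (c / 2) * |w.re - z.re| := by
      apply intervalIntegral.norm_integral_le_of_norm_le_const
      intro t ht
      have hdist : dist ((t : ℂ) + z.im * I) z < δ := by
        have h1 : ((t : ℂ) + z.im * I) - z = ((t - z.re : ℝ) : ℂ) := by simp [Complex.ext_iff]
        rw [Complex.dist_eq, h1, Complex.norm_real, Real.norm_eq_abs]
        calc |t - z.re| ≤ |w.re - z.re| := aux_abs ht
          _ ≤ ‖w - z‖ := by rw [← Complex.sub_re]; exact Complex.abs_re_le_norm _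
          _ < δ := by linarith
      rw [← dist_eq_norm]
      exact le_of_lt (hδ hdist)
    have b2 : ‖∫ s in z.im..w.im, (G (w.re + s * I) - G z)‖ ≤ (c / 2) * |w.im - z.im| := by
      apply intervalIntegral.norm_integral_le_of_norm_le_const
      intro s hs
      have hdist : dist ((w.re : ℂ) + s * I) z < δ := by
        have h1 : ((w.re : ℂ) + s * I) - z = ((w.re - z.re : ℝ) : ℂ) + ((s - z.im : ℝ) : ℂ) * I := by
          simp [Complex.ext_iff]
        rw [Complex.dist_eq, h1]
        calc ‖((w.re - z.re : ℝ) : ℂ) + ((s - z.im : ℝ) : ℂ) * I‖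
            ≤ ‖((w.re - z.re : ℝ) : ℂ)‖ + ‖((s - z.im : ℝ) : ℂ) * I‖ :=
              norm_add_le _ _
          _ = |w.re - z.re| + |s - z.im| := by
              simp [norm_mul, Complex.norm_real, Complex.norm_I, ← Complex.ofReal_sub]
          _ ≤ |w.re - z.re| + |w.im - z.im| := by
              have := aux_abs hs; linarith
          _ ≤ ‖w - z‖ + ‖w - z‖ := by
              have hr := Complex.abs_re_le_norm (w - z)
              have hi := Complex.abs_im_le_norm (w - z)
              rw [Complex.sub_re] at hr; rw [Complex.sub_im] at hi
              linarith
          _ < δ := by linarith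
      rw [← dist_eq_norm]
      exact le_of_lt (hδ hdist)
    calc ‖(∫ t in z.re..w.re, (G (t + z.im * I) - G z))
          + I • ∫ s in z.im..w.im, (G (w.re + s * I) - G z)‖
        ≤ ‖∫ t in z.re..w.re, (G (t + z.im * I) - G z)‖
          + ‖I • ∫ s in z.im..w.im, (G (w.re + s * I) - G z)‖ := norm_add_le _ _
      _ = ‖∫ t in z.re..w.re, (G (t + z.im * I) - G z)‖
          + ‖∫ s in z.im..w.im, (G (w.re + s * I) - G z)‖ := by
            rw [norm_smul]; simp
      _ ≤ (c / 2) * |w.re - z.re| + (c / 2) * |w.im - z.im| := by linarith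
      _ ≤ c * ‖w - z‖ := by
            have hr := Complex.abs_re_le_norm (w - z)
            have hi := Complex.abs_im_le_norm (w - z)
            rw [Complex.sub_re] at hr; rw [Complex.sub_im] at hi
            nlinarith
  -- conclude
  have hSopen : IsOpen {z : ℂ | r - 1 < z.im ∧ z.im < r + 1} := by
    have : {z : ℂ | r - 1 < z.im ∧ z.im < r + 1} = Complex.im ⁻¹' Ioo (r-1) (r+1) := rfl
    rw [this]; exact isOpen_Ioo.preimage Complex.continuous_im
  have hPd : DifferentiableOn ℂ P {z : ℂ | r - 1 < z.im ∧ z.im < r + 1} :=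
    fun z hz => (hder z hz.1 hz.2).differentiableAt.differentiableWithinAt
  have han : AnalyticOnNhd ℂ P {z : ℂ | r - 1 < z.im ∧ z.im < r + 1} :=
    (Complex.analyticOnNhd_iff_differentiableOn hSopen).mpr hPd
  have hand : AnalyticOnNhd ℂ (deriv P) {z : ℂ | r - 1 < z.im ∧ z.im < r + 1} :=
    han.deriv
  intro z h1 h2
  have hdP : DifferentiableAt ℂ (deriv P) z := (hand z ⟨h1, h2⟩).differentiableAt
  have heq : deriv P =ᶠ[nhds z] G :=
    Filter.eventually_of_mem (hSopen.mem_nhds ⟨h1, h2⟩) (fun w hw => (hder w hw.1 hw.2).deriv)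
  exact hdP.congr_of_eventuallyEq heq.symm


/-- Liouville-type theorem on a strip: a continuous bounded function on the closed strip
`0 ≤ Im z ≤ 1`, holomorphic on the open strip and satisfying the boundary periodicity
`F(x) = F(x + i)` for all real `x`, is constant on the strip. -/
theorem stmt_7 (F : ℂ → ℂ)
    (hc : ContinuousOn F {z : ℂ | 0 ≤ z.im ∧ z.im ≤ 1})
    (hb : ∃ C : ℝ, ∀ z ∈ {z : ℂ | 0 ≤ z.im ∧ z.im ≤ 1}, ‖F z‖ ≤ C)
    (hd : DifferentiableOn ℂ F {z : ℂ | 0 < z.im ∧ z.im < 1})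
    (hper : ∀ x : ℝ, F x = F (x + Complex.I)) :
    ∀ z ∈ {z : ℂ | 0 ≤ z.im ∧ z.im ≤ 1}, ∀ w ∈ {z : ℂ | 0 ≤ z.im ∧ z.im ≤ 1},
      F z = F w := by
  set G : ℂ → ℂ := fun z => F (z - (⌊z.im⌋ : ℂ) * I) with hGdef
  -- basic facts
  have him : ∀ (z : ℂ) (m : ℤ), (z - (m : ℂ) * I).im = z.im - m := by
    intro z m; simp
  have hmem : ∀ z : ℂ, (z - (⌊z.im⌋ : ℂ) * I) ∈ {z : ℂ | 0 ≤ z.im ∧ z.im ≤ 1} := by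
    intro z
    constructor
    · rw [him]; have := Int.floor_le z.im; linarith
    · rw [him]; have := Int.lt_floor_add_one z.im; linarith
  have hopen : IsOpen {z : ℂ | 0 < z.im ∧ z.im < 1} := by
    have : {z : ℂ | 0 < z.im ∧ z.im < 1} = Complex.im ⁻¹' Ioo 0 1 := rfl
    rw [this]; exact isOpen_Ioo.preimage Complex.continuous_im
  -- G agrees with F (· - m*I) on strips
  have hGeq : ∀ (z : ℂ) (m : ℤ), (m : ℝ) ≤ z.im → z.im < m + 1 → G z = F (z - (m : ℂ) * I) := by
    intro z m hm1 hm2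
    have : ⌊z.im⌋ = m := Int.floor_eq_iff.mpr ⟨hm1, by exact_mod_cast hm2⟩
    rw [hGdef]; simp only [this]
  -- continuity of translated F on closed substrips
  have hFcont : ∀ m : ℤ, ContinuousOn (fun z => F (z - (m : ℂ) * I))
      {z : ℂ | (m : ℝ) ≤ z.im ∧ z.im ≤ m + 1} := by
    intro m
    apply hc.comp (Continuous.continuousOn (by continuity))
    intro z hz
    constructor
    · rw [him]; linarith [hz.1]
    · rw [him]; linarith [hz.2]
  -- continuity of G
  have hGcont : Continuous G := by
    rw [continuous_iff_continuousAt]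
    intro z₀
    by_cases hz : z₀.im = (⌊z₀.im⌋ : ℝ)
    · -- z₀ on an integer line
      set m : ℤ := ⌊z₀.im⌋ with hm
      -- the value at points with im = m
      have hval : ∀ z : ℂ, z.im = (m : ℝ) → G z = F (z - (m : ℂ) * I) :=
        fun z h => hGeq z m (le_of_eq h.symm) (by rw [h]; linarith)
      have hval' : ∀ z : ℂ, z.im = (m : ℝ) → F (z - (m : ℂ) * I) = F (z - ((m - 1 : ℤ) : ℂ) * I) := by
        intro z h
        have e1 : z - (m : ℂ) * I = ((z.re : ℝ) : ℂ) := by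
          apply Complex.ext <;> simp [h]
        have e2 : z - ((m - 1 : ℤ) : ℂ) * I = ((z.re : ℝ) : ℂ) + I := by
          apply Complex.ext <;> simp [h] <;> push_cast <;> ring
        rw [e1, e2]; exact hper z.re
      -- upper side
      have hup : ContinuousWithinAt G {z : ℂ | (m : ℝ) ≤ z.im} z₀ := by
        have hcw : ContinuousWithinAt (fun z => F (z - (m : ℂ) * I))
            {z : ℂ | (m : ℝ) ≤ z.im ∧ z.im ≤ m + 1} z₀ :=
          (hFcont m) z₀ ⟨le_of_eq hz.symm, by rw [hz]; push_cast; linarith⟩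
        have hnb : {z : ℂ | (m : ℝ) ≤ z.im ∧ z.im ≤ m + 1} ∈
            nhdsWithin z₀ {z : ℂ | (m : ℝ) ≤ z.im} := by
          apply Filter.mem_of_superset (inter_mem_nhdsWithin _
            (IsOpen.mem_nhds ((isOpen_Iio (a := (m : ℝ) + 1)).preimage Complex.continuous_im)
              (by simp only [mem_preimage, mem_Iio, hz]; push_cast; linarith)))
          rintro z ⟨h1, h2⟩
          simp only [mem_preimage, mem_Iio] at h2
          simp only [mem_setOf_eq] at h1
          exact ⟨h1, le_of_lt h2⟩
        have hmono := hcw.mono_of_mem_nhdsWithin hnb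
        apply hmono.congr_of_eventuallyEq
        · apply Filter.eventually_of_mem (Filter.mem_of_superset (inter_mem_nhdsWithin _
            (IsOpen.mem_nhds ((isOpen_Iio (a := (m : ℝ) + 1)).preimage Complex.continuous_im)
              (by simp only [mem_preimage, mem_Iio, hz]; push_cast; linarith))) (subset_refl _))
          rintro z ⟨h1, h2⟩
          simp only [mem_preimage, mem_Iio] at h2
          simp only [mem_setOf_eq] at h1
          exact hGeq z m h1 h2
        · exact hval z₀ hz ▸ rfl
      -- lower side
      have hlo : ContinuousWithinAt G {z : ℂ | z.im ≤ (m : ℝ)} z₀ := by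
        have hcw : ContinuousWithinAt (fun z => F (z - ((m - 1 : ℤ) : ℂ) * I))
            {z : ℂ | ((m - 1 : ℤ) : ℝ) ≤ z.im ∧ z.im ≤ (m - 1 : ℤ) + 1} z₀ :=
          (hFcont (m - 1)) z₀ ⟨by push_cast; rw [← hz]; linarith, by push_cast; rw [← hz]; linarith⟩
        have hnb : {z : ℂ | ((m - 1 : ℤ) : ℝ) ≤ z.im ∧ z.im ≤ (m - 1 : ℤ) + 1} ∈
            nhdsWithin z₀ {z : ℂ | z.im ≤ (m : ℝ)} := by
          apply Filter.mem_of_superset (inter_mem_nhdsWithin _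
            (IsOpen.mem_nhds ((isOpen_Ioi (a := (m : ℝ) - 1)).preimage Complex.continuous_im)
              (by simp only [mem_preimage, mem_Ioi, hz]; push_cast; linarith)))
          rintro z ⟨h1, h2⟩
          simp only [mem_preimage, mem_Ioi] at h2
          simp only [mem_setOf_eq] at h1
          refine ⟨by push_cast; linarith, by push_cast; linarith⟩
        have hmono := hcw.mono_of_mem_nhdsWithin hnb
        apply hmono.congr_of_eventuallyEq
        · apply Filter.eventually_of_mem (Filter.mem_of_superset (inter_mem_nhdsWithin
            {z : ℂ | z.im ≤ (m : ℝ)}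
            (IsOpen.mem_nhds ((isOpen_Ioi (a := (m : ℝ) - 1)).preimage Complex.continuous_im)
              (by simp only [mem_preimage, mem_Ioi, hz]; push_cast; linarith))) (subset_refl _))
          rintro z ⟨h1, h2⟩
          simp only [mem_preimage, mem_Ioi] at h2
          simp only [mem_setOf_eq] at h1
          rcases lt_or_eq_of_le h1 with h1' | h1'
          · rw [hGeq z (m - 1) (by push_cast at h2 ⊢; linarith) (by push_cast at h2 ⊢; linarith)]
          · rw [hval z h1', hval' z h1']
        · rw [hval z₀ hz, hval' z₀ hz]
      have : ContinuousWithinAt G ({z : ℂ | (m : ℝ) ≤ z.im} ∪ {z : ℂ | z.im ≤ (m : ℝ)}) z₀ :=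
        hup.union hlo
      rw [← continuousWithinAt_univ]
      have huniv : {z : ℂ | (m : ℝ) ≤ z.im} ∪ {z : ℂ | z.im ≤ (m : ℝ)} = univ := by
        ext z; simp [le_total (m : ℝ) z.im]
      rwa [huniv] at this
    · -- z₀ strictly between integer lines
      set m : ℤ := ⌊z₀.im⌋ with hm
      have hlt : (m : ℝ) < z₀.im := lt_of_le_of_ne (Int.floor_le z₀.im) (Ne.symm hz)
      have hlt2 : z₀.im < m + 1 := Int.lt_floor_add_one z₀.im
      have hU : IsOpen {z : ℂ | (m : ℝ) < z.im ∧ z.im < m + 1} := by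
        have : {z : ℂ | (m : ℝ) < z.im ∧ z.im < m + 1} = Complex.im ⁻¹' Ioo (m : ℝ) (m + 1) := rfl
        rw [this]; exact isOpen_Ioo.preimage Complex.continuous_im
      have hFc : ContinuousAt (fun z => F (z - (m : ℂ) * I)) z₀ := by
        apply ContinuousAt.comp
        · apply hc.continuousAt
          apply Filter.mem_of_superset (hopen.mem_nhds ?_)
          · intro w hw; exact ⟨le_of_lt hw.1, le_of_lt hw.2⟩
          · rw [mem_setOf_eq, him]; constructor <;> linarith
        · exact (continuous_id.sub continuous_const).continuousAt
      apply hFc.congr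
      apply Filter.eventually_of_mem (hU.mem_nhds ⟨hlt, hlt2⟩)
      intro z hzU
      exact (hGeq z m (le_of_lt hzU.1) hzU.2).symm
  -- differentiability of G off integer lines
  have hd0 : ∀ z : ℂ, z.im ≠ (⌊z.im⌋ : ℝ) → DifferentiableAt ℂ G z := by
    intro z hz
    set m : ℤ := ⌊z.im⌋ with hm
    have hlt : (m : ℝ) < z.im := lt_of_le_of_ne (Int.floor_le z.im) (Ne.symm hz)
    have hlt2 : z.im < m + 1 := Int.lt_floor_add_one z.im
    have hU : IsOpen {w : ℂ | (m : ℝ) < w.im ∧ w.im < m + 1} := by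
      have : {w : ℂ | (m : ℝ) < w.im ∧ w.im < m + 1} = Complex.im ⁻¹' Ioo (m : ℝ) (m + 1) := rfl
      rw [this]; exact isOpen_Ioo.preimage Complex.continuous_im
    have hFd : DifferentiableAt ℂ (fun w => F (w - (m : ℂ) * I)) z := by
      apply DifferentiableAt.comp
      · apply hd.differentiableAt
        apply Filter.mem_of_superset (hopen.mem_nhds ?_)
        · exact subset_refl _
        · rw [mem_setOf_eq, him]; constructor <;> linarith
      · exact differentiable_id.differentiableAt.sub (differentiableAt_const _)
    apply hFd.congr_of_eventuallyEq
    apply Filter.eventually_of_mem (hU.mem_nhds ⟨hlt, hlt2⟩)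
    intro w hw
    exact hGeq w m (le_of_lt hw.1) hw.2
  -- G entire
  have hGdiff : Differentiable ℂ G := by
    intro z
    by_cases hz : z.im = (⌊z.im⌋ : ℝ)
    · apply removable_line hGcont (r := (⌊z.im⌋ : ℝ)) ?_ z (by linarith [hz.ge, hz.le]) ?_
      · intro ζ h1 h2 h3
        apply hd0
        set k : ℤ := ⌊z.im⌋
        rcases lt_or_gt_of_ne h3 with h | h
        · have : ⌊ζ.im⌋ = k - 1 := Int.floor_eq_iff.mpr ⟨by push_cast; linarith, by push_cast; linarith⟩
          rw [this]; push_cast; linarith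
        · have : ⌊ζ.im⌋ = k := Int.floor_eq_iff.mpr ⟨by push_cast; linarith, by push_cast; linarith⟩
          rw [this]; push_cast; linarith
      · linarith [hz.le]
    · exact hd0 z hz
  -- boundedness
  obtain ⟨C, hC⟩ := hb
  have hGb : Bornology.IsBounded (Set.range G) := by
    rw [isBounded_iff_forall_norm_le]
    refine ⟨C, ?_⟩
    rintro x ⟨z, rfl⟩
    exact hC _ (hmem z)
  -- F = G on the closed strip
  have hFG : ∀ z : ℂ, 0 ≤ z.im → z.im ≤ 1 → F z = G z := by
    intro z h0 h1
    rcases lt_or_eq_of_le h1 with h1' | h1'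
    · rw [hGeq z 0 (by exact_mod_cast h0) (by push_cast; linarith)]
      simp
    · rw [hGeq z 1 (by push_cast; linarith) (by push_cast; linarith)]
      have e1 : z - (1 : ℂ) * I = ((z.re : ℝ) : ℂ) := by
        apply Complex.ext <;> simp [← h1']
      have e2 : ((z.re : ℝ) : ℂ) + I = z := by
        apply Complex.ext <;> simp [← h1']
      push_cast
      rw [e1, hper z.re, e2]
  -- conclude by Liouville
  intro z hz w hw
  rw [hFG z hz.1 hz.2, hFG w hw.1 hw.2]
  exact hGdiff.apply_eq_apply_of_bounded hGb z w
end

section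
/- Let s ∈ (−1,1) and λ ∈ ℝ. Set a := u_λ(s) and b := u_λ(−s) where u_λ(x) = ((1+x) − e^{−λ}(1−x))/((1+x) + e^{−λ}(1−x)), and define x⁰ := (a+b)/2, x¹ := (a−b)/2. Then ((1+x⁰)² − (x¹)²) / ((1−x⁰)² − (x¹)²) = e^{2λ}; in particular both numerator and denominator are strictly positive, and ½·log of the ratio of the squared Lorentzian distances from the diamond's vertices (−1,0) and (1,0) to the orbit point (x⁰,x¹) equals λ. -/
/-- Orbit computation for the geometric time function on a Minkowski diamond: for the
orbit point `(x⁰, x¹)` of `(0, s)` under the conformal isotropy flow `u_λ` of the diamond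
with vertices `(±1, 0)`, the ratio of the squared Lorentzian distances to the vertices is
`e^{2λ}`, both squared distances being positive; hence half the logarithm of the ratio
equals `λ`. -/
theorem stmt_11 (s lam : ℝ) (hs : s ∈ Set.Ioo (-1 : ℝ) 1)
    (a b x0 x1 : ℝ)
    (ha : a = ((1 + s) - Real.exp (-lam) * (1 - s)) /
      ((1 + s) + Real.exp (-lam) * (1 - s)))
    (hb : b = ((1 + -s) - Real.exp (-lam) * (1 - -s)) /
      ((1 + -s) + Real.exp (-lam) * (1 - -s)))
    (hx0 : x0 = (a + b) / 2) (hx1 : x1 = (a - b) / 2) :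
    0 < (1 + x0) ^ 2 - x1 ^ 2 ∧ 0 < (1 - x0) ^ 2 - x1 ^ 2 ∧
      ((1 + x0) ^ 2 - x1 ^ 2) / ((1 - x0) ^ 2 - x1 ^ 2) = Real.exp (2 * lam) ∧
      (1 / 2) * Real.log (((1 + x0) ^ 2 - x1 ^ 2) / ((1 - x0) ^ 2 - x1 ^ 2)) = lam := by
  obtain ⟨hs1, hs2⟩ := hs
  set E := Real.exp (-lam) with hE
  have hEpos : 0 < E := Real.exp_pos _
  have h1 : (0:ℝ) < 1 + s := by linarith
  have h2 : (0:ℝ) < 1 - s := by linarith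
  have hD1 : (0:ℝ) < (1 + s) + E * (1 - s) := by positivity
  have hD2 : (0:ℝ) < (1 + -s) + E * (1 - -s) := by nlinarith
  have hD1' := ne_of_gt hD1
  have hD2' := ne_of_gt hD2
  have ea1 : 1 + a = 2 * (1 + s) / ((1 + s) + E * (1 - s)) := by
    rw [ha, eq_div_iff hD1', add_mul, div_mul_cancel₀ _ hD1']; ring
  have ea2 : 1 - a = 2 * E * (1 - s) / ((1 + s) + E * (1 - s)) := by
    rw [ha, eq_div_iff hD1', sub_mul, div_mul_cancel₀ _ hD1']; ring
  have eb1 : 1 + b = 2 * (1 - s) / ((1 + -s) + E * (1 - -s)) := by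
    rw [hb, eq_div_iff hD2', add_mul, div_mul_cancel₀ _ hD2']; ring
  have eb2 : 1 - b = 2 * E * (1 + s) / ((1 + -s) + E * (1 - -s)) := by
    rw [hb, eq_div_iff hD2', sub_mul, div_mul_cancel₀ _ hD2']; ring
  have fac1 : (1 + x0) ^ 2 - x1 ^ 2 = (1 + a) * (1 + b) := by rw [hx0, hx1]; ring
  have fac2 : (1 - x0) ^ 2 - x1 ^ 2 = (1 - a) * (1 - b) := by rw [hx0, hx1]; ring
  have key1 : (1 + x0) ^ 2 - x1 ^ 2 =
      4 * ((1 + s) * (1 - s)) / (((1 + s) + E * (1 - s)) * ((1 + -s) + E * (1 - -s))) := by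
    rw [fac1, ea1, eb1, div_mul_div_comm]; congr 1; ring
  have key2 : (1 - x0) ^ 2 - x1 ^ 2 =
      4 * E ^ 2 * ((1 + s) * (1 - s)) /
        (((1 + s) + E * (1 - s)) * ((1 + -s) + E * (1 - -s))) := by
    rw [fac2, ea2, eb2, div_mul_div_comm]; congr 1; ring
  have hp1 : 0 < (1 + x0) ^ 2 - x1 ^ 2 := by rw [key1]; positivity
  have hp2 : 0 < (1 - x0) ^ 2 - x1 ^ 2 := by rw [key2]; positivity
  have hratio : ((1 + x0) ^ 2 - x1 ^ 2) / ((1 - x0) ^ 2 - x1 ^ 2) = Real.exp (2 * lam) := by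
    rw [key1, key2, div_div_div_cancel_right₀ (by positivity)]
    have hexp : E ^ 2 * Real.exp (2 * lam) = 1 := by
      rw [hE, ← Real.exp_nat_mul, ← Real.exp_add]
      norm_num
    have hss : (1 + s) * (1 - s) ≠ 0 := by positivity
    have hE2 : E ^ 2 ≠ 0 := by positivity
    rw [div_eq_iff (by positivity)]
    linear_combination (-(4 * ((1 + s) * (1 - s)))) * hexp
  refine ⟨hp1, hp2, hratio, ?_⟩
  rw [hratio, Real.log_exp]; ring
end
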